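/- The initial row of the c-table is c_{0j}(n, α, β) = [(σ+1)_n (β+2)_n / (n! B(α+1, β+1))] · (-1)^j / ((α+1)_{n-j} (β+2)_j) for 0 ≤ j ≤ n, where σ = α+β+1. -/

import Mathlib

open Finset

/-- Pochhammer symbol `(c)_k = c (c+1) ⋯ (c+k-1)`. -/
noncomputable def poch (c : ℝ) (k : ℕ) : ℝ := ∏ j ∈ Finset.range k, (c + j)

/-- Bernstein polynomial `B^n_i(x)`. -/
noncomputable def bern (n i : ℕ) (x : ℝ) : ℝ := (n.choose i : ℝ) * x ^ i * (1 - x) ^ (n - i)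

/-- Jacobi inner product on [0,1]. -/
noncomputable def jip (α β : ℝ) (f g : ℝ → ℝ) : ℝ :=
  ∫ x in (0:ℝ)..1, (1 - x) ^ α * x ^ β * f x * g x

/-- Beta function `B(a,b) = Γ(a)Γ(b)/Γ(a+b)`. -/
noncomputable def betaF (a b : ℝ) : ℝ := Real.Gamma a * Real.Gamma b / Real.Gamma (a + b)

/-- Hahn polynomial `Q_m(x; α, β, N)` as a terminating ₃F₂ sum. -/
noncomputable def hahn (m : ℕ) (x : ℝ) (α β : ℝ) (N : ℕ) : ℝ :=
  ∑ k ∈ Finset.range (m + 1),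
    poch (-(m : ℝ)) k * poch ((m : ℝ) + α + β + 1) k * poch (-x) k /
      ((k.factorial : ℝ) * poch (α + 1) k * poch (-(N : ℝ)) k)

/-- Shifted Jacobi polynomial `R_m^{(α,β)}(x)`. -/
noncomputable def sjac (m : ℕ) (α β : ℝ) (x : ℝ) : ℝ :=
  (poch (α + 1) m / (m.factorial : ℝ)) *
    ∑ k ∈ Finset.range (m + 1),
      poch (-(m : ℝ)) k * poch ((m : ℝ) + α + β + 1) k /
        ((k.factorial : ℝ) * poch (α + 1) k) * (1 - x) ^ k

open Polynomial MeasureTheory intervalIntegral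

lemma cplx_pt (a b x : ℝ) (hx : x ∈ Set.Ioc (0:ℝ) 1) :
    (x:ℂ) ^ ((a+1:ℂ)-1) * (1-(x:ℂ)) ^ ((b+1:ℂ)-1) = ((x ^ a * (1 - x) ^ b : ℝ) : ℂ) := by
  have hx0 : (0:ℝ) ≤ x := le_of_lt hx.1
  have hx1 : (0:ℝ) ≤ 1 - x := by linarith [hx.2]
  have e1 : (x:ℂ) ^ ((a+1:ℂ)-1) = ((x ^ a : ℝ) : ℂ) := by
    rw [show ((a+1:ℂ)-1) = (a:ℂ) by ring, ← Complex.ofReal_cpow hx0]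
  have e2 : (1-(x:ℂ)) ^ ((b+1:ℂ)-1) = (((1-x) ^ b : ℝ) : ℂ) := by
    rw [show ((b+1:ℂ)-1) = (b:ℂ) by ring, show (1-(x:ℂ)) = (((1-x:ℝ)):ℂ) by push_cast; ring,
      ← Complex.ofReal_cpow hx1]
  rw [e1, e2, ← Complex.ofReal_mul]

lemma betaIntegrable (a b : ℝ) (ha : -1 < a) (hb : -1 < b) :
    IntervalIntegrable (fun x : ℝ => x ^ a * (1 - x) ^ b) volume 0 1 := by
  have h := Complex.betaIntegral_convergent (u := (a+1 : ℂ)) (v := (b+1 : ℂ))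
    (by simpa using by linarith) (by simpa using by linarith)
  rw [intervalIntegrable_iff_integrableOn_Ioc_of_le (by norm_num)] at h ⊢
  have h2 : IntegrableOn (fun x : ℝ => (((x:ℂ) ^ ((a+1:ℂ)-1) * (1-(x:ℂ)) ^ ((b+1:ℂ)-1)).re)) (Set.Ioc 0 1) volume := h.re
  exact h2.congr_fun (fun x hx => by dsimp only; rw [cplx_pt a b x hx, Complex.ofReal_re]) measurableSet_Ioc

lemma betaIntegral_eval (a b : ℝ) (ha : -1 < a) (hb : -1 < b) :
    ∫ x in (0:ℝ)..1, x ^ a * (1 - x) ^ b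
      = Real.Gamma (a+1) * Real.Gamma (b+1) / Real.Gamma (a+b+2) := by
  have key := Complex.Gamma_mul_Gamma_eq_betaIntegral (s := (a+1:ℂ)) (t := (b+1:ℂ))
    (by simpa using by linarith) (by simpa using by linarith)
  have hInt : Complex.betaIntegral (a+1) (b+1)
      = ((∫ x in (0:ℝ)..1, x ^ a * (1 - x) ^ b : ℝ) : ℂ) := by
    rw [Complex.betaIntegral, ← intervalIntegral.integral_ofReal]
    refine intervalIntegral.integral_congr_ae ?_
    have hu : Set.uIoc (0:ℝ) 1 = Set.Ioc 0 1 := by rw [Set.uIoc_of_le]; norm_num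
    filter_upwards with x hx
    exact cplx_pt a b x (hu ▸ hx)
  rw [hInt] at key
  have hG : Real.Gamma (a+b+2) ≠ 0 := ne_of_gt (Real.Gamma_pos_of_pos (by linarith))
  have h2 : ((Real.Gamma (a+1) * Real.Gamma (b+1) : ℝ) : ℂ)
      = ((Real.Gamma (a+b+2) * ∫ x in (0:ℝ)..1, x ^ a * (1 - x) ^ b : ℝ) : ℂ) := by
    push_cast
    rw [← Complex.Gamma_ofReal, ← Complex.Gamma_ofReal, ← Complex.Gamma_ofReal]
    push_cast
    rw [show ((a:ℂ)+(b:ℂ)+2) = ((a+1:ℂ)+(b+1:ℂ)) by ring]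
    exact key
  have h3 := Complex.ofReal_injective h2
  field_simp
  linarith [h3]

lemma poch_pos {c : ℝ} (hc : 0 < c) (k : ℕ) : 0 < poch c k :=
  Finset.prod_pos (fun j _ => by positivity)

lemma poch_succ (c : ℝ) (k : ℕ) : poch c (k+1) = poch c k * (c + k) := by
  rw [poch, Finset.prod_range_succ]; rfl

lemma poch_add (c : ℝ) (k m : ℕ) : poch c (k+m) = poch c k * poch (c + k) m := by
  rw [poch, poch, poch, Finset.prod_range_add]
  congr 1
  exact Finset.prod_congr rfl (fun j _ => by push_cast; ring)

lemma poch_one (c : ℝ) : poch c 1 = c := by simp [poch]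

lemma poch_succ' (c : ℝ) (k : ℕ) : poch c (k+1) = c * poch (c+1) k := by
  rw [add_comm, poch_add c 1 k, poch_one]
  norm_num

lemma Gamma_poch {c : ℝ} (hc : 0 < c) (k : ℕ) : Real.Gamma (c + k) = poch c k * Real.Gamma c := by
  induction k with
  | zero => simp [poch]
  | succ k ih =>
    have : c + (k+1:ℕ) = (c + k) + 1 := by push_cast; ring
    rw [this, Real.Gamma_add_one (by positivity), ih, poch_succ]; ring

lemma pascal_step (n : ℕ) (f : ℕ → ℝ) :
    ∑ j ∈ range (n+2), (-1:ℝ)^j * ((n+1).choose j) * f j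
      = ∑ j ∈ range (n+1), (-1:ℝ)^j * (n.choose j) * (f j - f (j+1)) := by
  rw [Finset.sum_range_succ' (fun j => (-1:ℝ)^j * ((n+1).choose j) * f j) (n+1)]
  have key : ∀ i, (-1:ℝ)^(i+1) * ((n+1).choose (i+1)) * f (i+1)
      = (-1)^(i+1) * (n.choose (i+1)) * f (i+1) + (-1)^(i+1) * (n.choose i) * f (i+1) := by
    intro i
    rw [Nat.choose_succ_succ]
    push_cast; ring
  rw [Finset.sum_congr rfl (fun i _ => key i), Finset.sum_add_distrib]
  have e1 : ∑ i ∈ range (n+1), (-1:ℝ)^(i+1) * (n.choose (i+1)) * f (i+1)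
      + (-1:ℝ)^0 * ((n+1).choose 0) * f 0
      = ∑ j ∈ range (n+1), (-1:ℝ)^j * (n.choose j) * f j := by
    rw [Finset.sum_range_succ' (fun j => (-1:ℝ)^j * (n.choose j) * f j) n]
    rw [Finset.sum_range_succ (fun i => (-1:ℝ)^(i+1) * (n.choose (i+1)) * f (i+1)) n]
    simp [Nat.choose_succ_self]
  have e2 : ∑ i ∈ range (n+1), (-1:ℝ)^(i+1) * (n.choose i) * f (i+1)
      = -∑ i ∈ range (n+1), (-1:ℝ)^i * (n.choose i) * f (i+1) := by
    rw [← Finset.sum_neg_distrib]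
    exact Finset.sum_congr rfl (fun i _ => by ring)
  calc _ = (∑ i ∈ range (n+1), (-1:ℝ)^(i+1) * (n.choose (i+1)) * f (i+1)
            + (-1:ℝ)^0 * ((n+1).choose 0) * f 0)
          + ∑ i ∈ range (n+1), (-1:ℝ)^(i+1) * (n.choose i) * f (i+1) := by ring
    _ = ∑ j ∈ range (n+1), (-1:ℝ)^j * (n.choose j) * f j
          - ∑ i ∈ range (n+1), (-1:ℝ)^i * (n.choose i) * f (i+1) := by rw [e1, e2]; ring
    _ = _ := by rw [← Finset.sum_sub_distrib]; exact Finset.sum_congr rfl (fun i _ => by ring)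

lemma sum_inv_choose (n : ℕ) : ∀ x : ℝ, 0 < x →
    ∑ j ∈ range (n+1), (-1:ℝ)^j * (n.choose j) * (x + j)⁻¹
      = n.factorial / poch x (n+1) := by
  induction n with
  | zero => intro x hx; simp [poch_succ, poch]
  | succ n ih =>
    intro x hx
    rw [pascal_step n (fun j => (x + j)⁻¹)]
    have split : ∑ j ∈ range (n+1), (-1:ℝ)^j * (n.choose j) * ((x + j)⁻¹ - (x + (j+1:ℕ))⁻¹)
        = (∑ j ∈ range (n+1), (-1:ℝ)^j * (n.choose j) * (x + j)⁻¹)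
          - ∑ j ∈ range (n+1), (-1:ℝ)^j * (n.choose j) * ((x+1) + j)⁻¹ := by
      rw [← Finset.sum_sub_distrib]
      refine Finset.sum_congr rfl (fun j _ => by push_cast; ring)
    rw [split, ih x hx, ih (x+1) (by linarith)]
    have h1 : poch x (n+2) = x * (poch (x+1) n * (x + 1 + n)) := by
      rw [poch_succ', poch_succ]
    have h2 : poch x (n+1) = x * poch (x+1) n := poch_succ' x n
    have h3 : poch (x+1) (n+1) = poch (x+1) n * (x + 1 + n) := poch_succ (x+1) n
    have hp : 0 < poch (x+1) n := poch_pos (by linarith) n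
    rw [h1, h2, h3, Nat.factorial_succ]
    have hxn : (0:ℝ) < x + 1 + n := by positivity
    field_simp
    push_cast
    ring

lemma alt_sum_poly (n : ℕ) : ∀ p : Polynomial ℝ, p.natDegree < n →
    ∑ j ∈ range (n+1), (-1:ℝ)^j * (n.choose j) * p.eval (j:ℝ) = 0 := by
  induction n with
  | zero => intro p hp; exact absurd hp (Nat.not_lt_zero _)
  | succ n ih =>
    intro p hp
    rw [pascal_step n (fun j => p.eval (j:ℝ))]
    set q : Polynomial ℝ := p - p.comp (X + 1) with hq
    have heval : ∀ j : ℕ, p.eval (j:ℝ) - p.eval ((j+1:ℕ):ℝ) = q.eval (j:ℝ) := by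
      intro j
      simp only [hq, eval_sub, eval_comp, eval_add, eval_X, eval_one]
      push_cast
      ring
    have hsum : ∑ j ∈ range (n+1), (-1:ℝ)^j * (n.choose j) * (p.eval (j:ℝ) - p.eval ((j+1:ℕ):ℝ))
        = ∑ j ∈ range (n+1), (-1:ℝ)^j * (n.choose j) * q.eval (j:ℝ) :=
      Finset.sum_congr rfl (fun j _ => by rw [heval j])
    rw [hsum]
    by_cases hq0 : q = 0
    · simp [hq0]
    · have hp0 : p ≠ 0 := by
        intro h; apply hq0; simp [hq, h]
      have h1 : (X + 1 : Polynomial ℝ).natDegree = 1 := by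
        simpa using natDegree_X_add_C (1:ℝ)
      have hdp : 0 < p.natDegree := by
        rcases Nat.eq_zero_or_pos p.natDegree with h0 | h0
        · exfalso; apply hq0
          obtain ⟨a, rfl⟩ := Polynomial.natDegree_eq_zero.mp h0
          simp [hq]
        · exact h0
      have hdcomp : (p.comp (X + 1)).natDegree = p.natDegree := by
        rw [natDegree_comp, h1, mul_one]
      have hmon : (X + 1 : Polynomial ℝ).leadingCoeff = 1 := by
        simpa using (monic_X_add_C (1:ℝ)).leadingCoeff
      have hlc : p.leadingCoeff = (p.comp (X + 1)).leadingCoeff := by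
        rw [leadingCoeff_comp (by rw [h1]; norm_num), hmon, one_pow, mul_one]
      have hcomp0 : p.comp (X + 1) ≠ 0 := by
        intro h
        rw [h, natDegree_zero] at hdcomp
        omega
      have hdeg : (p.comp (X+1)).degree = p.degree := by
        rw [degree_eq_natDegree hcomp0, degree_eq_natDegree hp0, hdcomp]
      have hlt : q.degree < p.degree := degree_sub_lt hdeg.symm hp0 hlc
      have hnd : q.natDegree < p.natDegree := natDegree_lt_natDegree hq0 hlt
      exact ih q (by omega)

lemma sum_inv_choose_poly (n : ℕ) (p : Polynomial ℝ) (hp : p.natDegree ≤ n) (x : ℝ) (hx : 0 < x) :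
    ∑ j ∈ range (n+1), (-1:ℝ)^j * (n.choose j) * p.eval (j:ℝ) / (x + j)
      = p.eval (-x) * n.factorial / poch x (n+1) := by
  obtain ⟨h, hh⟩ : (X - C (-x)) ∣ (p - C (p.eval (-x))) :=
    dvd_iff_isRoot.mpr (by simp [IsRoot])
  have heval : ∀ j : ℕ, p.eval (j:ℝ) = p.eval (-x) + ((j:ℝ) + x) * h.eval (j:ℝ) := by
    intro j
    have := congrArg (Polynomial.eval (j:ℝ)) hh
    simp only [eval_sub, eval_C, eval_mul, eval_X] at this
    linarith [this]
  have hsumh : ∑ j ∈ range (n+1), (-1:ℝ)^j * (n.choose j) * h.eval (j:ℝ) = 0 := by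
    by_cases h0 : h = 0
    · simp [h0]
    · refine alt_sum_poly n h ?_
      have hXC : (X - C (-x) : Polynomial ℝ) ≠ 0 := X_sub_C_ne_zero _
      have hmul : (p - C (p.eval (-x))).natDegree = 1 + h.natDegree := by
        rw [hh, natDegree_mul hXC h0, natDegree_X_sub_C]
      have hle : (p - C (p.eval (-x))).natDegree ≤ n :=
        le_trans (natDegree_sub_le _ _) (by simp [hp])
      omega
  have split : ∀ j ∈ range (n+1), (-1:ℝ)^j * (n.choose j) * p.eval (j:ℝ) / (x + j)
      = p.eval (-x) * ((-1:ℝ)^j * (n.choose j) * (x + j)⁻¹)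
        + (-1:ℝ)^j * (n.choose j) * h.eval (j:ℝ) := by
    intro j _
    rw [heval j]
    have : x + (j:ℝ) ≠ 0 := by positivity
    field_simp
    ring
  rw [Finset.sum_congr rfl split, Finset.sum_add_distrib, hsumh, add_zero,
    ← Finset.mul_sum, sum_inv_choose n x hx]
  ring

lemma poch_zero (c : ℝ) : poch c 0 = 1 := by simp [poch]

lemma keyid (α β : ℝ) (hα : α > -1) (hβ : β > -1) (n r : ℕ) (hr : r ≤ n) :
    ∑ j ∈ range (n+1),
      ((poch (α + β + 2) n * poch (β + 2) n / ((n.factorial : ℝ) * betaF (α + 1) (β + 1))) *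
          ((-1:ℝ)^j / (poch (α+1) (n-j) * poch (β+2) j)))
        * ((n.choose j : ℝ) * (n.choose r : ℝ)
            * betaF (β + ((j+r : ℕ) : ℝ) + 1) (α + (((n-j)+(n-r) : ℕ) : ℝ) + 1))
      = if r = 0 then 1 else 0 := by
  have hα1 : (0:ℝ) < α + 1 := by linarith
  have hβ1 : (0:ℝ) < β + 1 := by linarith
  have hβ2 : (0:ℝ) < β + 2 := by linarith
  have hσ : (0:ℝ) < α + β + 2 := by linarith
  have hΓσ : Real.Gamma (α+β+2) ≠ 0 := ne_of_gt (Real.Gamma_pos_of_pos hσ)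
  have hΓα : Real.Gamma (α+1) ≠ 0 := ne_of_gt (Real.Gamma_pos_of_pos hα1)
  have hΓβ : Real.Gamma (β+1) ≠ 0 := ne_of_gt (Real.Gamma_pos_of_pos hβ1)
  set K : ℝ := poch (α + β + 2) n * poch (β + 2) n / ((n.factorial : ℝ) * betaF (α + 1) (β + 1)) with hK
  set CST : ℝ := (n.choose r : ℝ) * poch (β+1) r * K * Real.Gamma (β+1) * Real.Gamma (α+1)
      / (poch (α+β+2) (2*n) * Real.Gamma (α+β+2)) with hCST
  have hterm : ∀ j ∈ range (n+1),
      (K * ((-1:ℝ)^j / (poch (α+1) (n-j) * poch (β+2) j)))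
        * ((n.choose j : ℝ) * (n.choose r : ℝ)
            * betaF (β + ((j+r : ℕ) : ℝ) + 1) (α + (((n-j)+(n-r) : ℕ) : ℝ) + 1))
      = CST * ((-1:ℝ)^j * (n.choose j : ℝ)
          * (poch (β+1+(r:ℝ)) j / poch (β+2) j) * poch (α+1+((n-j : ℕ):ℝ)) (n-r)) := by
    intro j hjm
    have hj : j ≤ n := by simp only [Finset.mem_range] at hjm; omega
    have hG1 : Real.Gamma (β + ((j+r : ℕ) : ℝ) + 1) = poch (β+1) (j+r) * Real.Gamma (β+1) := by
      rw [show β + ((j+r : ℕ) : ℝ) + 1 = (β+1) + ((j+r : ℕ) : ℝ) by ring]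
      exact Gamma_poch hβ1 _
    have hG2 : Real.Gamma (α + (((n-j)+(n-r) : ℕ) : ℝ) + 1)
        = poch (α+1) ((n-j)+(n-r)) * Real.Gamma (α+1) := by
      rw [show α + (((n-j)+(n-r) : ℕ) : ℝ) + 1 = (α+1) + (((n-j)+(n-r) : ℕ) : ℝ) by ring]
      exact Gamma_poch hα1 _
    have hcast : (β + ((j+r : ℕ) : ℝ) + 1) + (α + (((n-j)+(n-r) : ℕ) : ℝ) + 1)
        = (α+β+2) + ((2*n : ℕ) : ℝ) := by
      push_cast [Nat.cast_sub hj, Nat.cast_sub hr]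
      ring
    have hG3 : Real.Gamma ((β + ((j+r : ℕ) : ℝ) + 1) + (α + (((n-j)+(n-r) : ℕ) : ℝ) + 1))
        = poch (α+β+2) (2*n) * Real.Gamma (α+β+2) := by
      rw [hcast]; exact Gamma_poch hσ _
    have hp1 : poch (β+1) (j+r) = poch (β+1) r * poch (β+1+(r:ℝ)) j := by
      rw [add_comm j r, poch_add]
    have hp2 : poch (α+1) ((n-j)+(n-r)) = poch (α+1) (n-j) * poch (α+1+((n-j:ℕ):ℝ)) (n-r) :=
      poch_add _ _ _
    rw [betaF, hG1, hG2, hG3, hp1, hp2]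
    have n1 : poch (α+1) (n-j) ≠ 0 := ne_of_gt (poch_pos hα1 _)
    have n2 : poch (β+2) j ≠ 0 := ne_of_gt (poch_pos hβ2 _)
    have n3 : poch (α+β+2) (2*n) ≠ 0 := ne_of_gt (poch_pos hσ _)
    rw [hCST]
    field_simp
  rw [Finset.sum_congr rfl hterm]
  rcases Nat.eq_zero_or_pos r with rfl | hrpos
  · -- r = 0
    rw [if_pos rfl]
    set P : Polynomial ℝ := ∏ i ∈ range n, (C (α+(n:ℝ)+1+(i:ℝ)) - X) with hP
    have hPne : ∀ i ∈ range n, (C (α+(n:ℝ)+1+(i:ℝ)) - X) ≠ 0 := by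
      intro i _
      rw [show (C (α+(n:ℝ)+1+(i:ℝ)) - X) = -(X - C (α+(n:ℝ)+1+(i:ℝ))) by ring]
      exact neg_ne_zero.mpr (X_sub_C_ne_zero _)
    have hPdeg : P.natDegree = n := by
      rw [hP, natDegree_prod _ _ hPne]
      rw [Finset.sum_congr rfl (fun i _ => ?_), Finset.sum_const, smul_eq_mul, mul_one,
        Finset.card_range]
      rw [show (C (α+(n:ℝ)+1+(i:ℝ)) - X) = -(X - C (α+(n:ℝ)+1+(i:ℝ))) by ring]
      rw [natDegree_neg, natDegree_X_sub_C]
    have hPeval : ∀ j : ℕ, j ≤ n → P.eval (j:ℝ) = poch (α+1+((n-j:ℕ):ℝ)) n := by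
      intro j hj
      rw [hP, eval_prod, poch]
      refine Finset.prod_congr rfl (fun i _ => ?_)
      rw [eval_sub, eval_C, eval_X, Nat.cast_sub hj]
      ring
    have hstep : ∀ j ∈ range (n+1),
        CST * ((-1:ℝ)^j * (n.choose j : ℝ)
          * (poch (β+1+((0:ℕ):ℝ)) j / poch (β+2) j) * poch (α+1+((n-j : ℕ):ℝ)) (n-0))
        = (CST * (β+1)) * ((-1:ℝ)^j * (n.choose j : ℝ) * P.eval (j:ℝ) / ((β+1) + (j:ℝ))) := by
      intro j hjm
      have hj : j ≤ n := by simp only [Finset.mem_range] at hjm; omega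
      have hA : poch (β+1) j * (β+1+(j:ℝ)) = (β+1) * poch (β+2) j := by
        have h1 := poch_succ (β+1) j
        have h2 := poch_succ' (β+1) j
        rw [show (β+1+1:ℝ) = β+2 by ring] at h2
        rw [h1] at h2
        linarith [h2]
      have n2 : poch (β+2) j ≠ 0 := ne_of_gt (poch_pos hβ2 _)
      have n4 : β+1+(j:ℝ) ≠ 0 := ne_of_gt (by positivity)
      have hdiv : poch (β+1) j / poch (β+2) j = (β+1) / (β+1+(j:ℝ)) := by
        rw [div_eq_div_iff n2 n4]
        linarith [hA]
      rw [hPeval j hj]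
      simp only [Nat.cast_zero, add_zero, Nat.sub_zero]
      rw [hdiv]
      ring
    rw [Finset.sum_congr rfl hstep, ← Finset.mul_sum]
    have hsic := sum_inv_choose_poly n P (le_of_eq hPdeg) (β+1) hβ1
    rw [hsic]
    have hPevalneg : P.eval (-(β+1)) = poch (α+β+(n:ℝ)+2) n := by
      rw [hP, eval_prod, poch]
      refine Finset.prod_congr rfl (fun i _ => ?_)
      rw [eval_sub, eval_C, eval_X]
      ring
    rw [hPevalneg]
    -- final algebra
    have hσn : (0:ℝ) < α+β+(n:ℝ)+2 := by have h0 : (0:ℝ) ≤ n := Nat.cast_nonneg n; linarith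
    have n5 : poch (α+β+2) n ≠ 0 := ne_of_gt (poch_pos hσ _)
    have n6 : poch (α+β+(n:ℝ)+2) n ≠ 0 := ne_of_gt (poch_pos hσn _)
    have n7 : poch (β+2) n ≠ 0 := ne_of_gt (poch_pos hβ2 _)
    have n8 : ((n.factorial : ℝ)) ≠ 0 := by positivity
    have n9 : (β+1:ℝ) ≠ 0 := by positivity
    rw [hCST, hK, betaF]
    rw [poch_zero, show 2*n = n + n from by ring, poch_add,
      show α+β+2+((n:ℕ):ℝ) = α+β+(n:ℝ)+2 from by push_cast; ring,
      poch_succ' (β+1) n, show β+1+1 = β+2 from by ring]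
    simp only [Nat.choose_zero_right, Nat.cast_one]
    field_simp
    ring
  · -- r ≥ 1
    rw [if_neg (by omega)]
    set Q : Polynomial ℝ :=
      (∏ i ∈ range (r-1), (X + C (β+2+(i:ℝ)))) * (∏ i ∈ range (n-r), (C (α+(n:ℝ)+1+(i:ℝ)) - X))
      with hQ
    have hne1 : ∀ i ∈ range (r-1), (X + C (β+2+(i:ℝ))) ≠ 0 := by
      intro i _
      rw [show (X + C (β+2+(i:ℝ))) = X - C (-(β+2+(i:ℝ))) by rw [map_neg]; ring]
      exact X_sub_C_ne_zero _
    have hne2 : ∀ i ∈ range (n-r), (C (α+(n:ℝ)+1+(i:ℝ)) - X) ≠ 0 := by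
      intro i _
      rw [show (C (α+(n:ℝ)+1+(i:ℝ)) - X) = -(X - C (α+(n:ℝ)+1+(i:ℝ))) by ring]
      exact neg_ne_zero.mpr (X_sub_C_ne_zero _)
    have hd1 : (∏ i ∈ range (r-1), (X + C (β+2+(i:ℝ)))).natDegree = r-1 := by
      rw [natDegree_prod _ _ hne1]
      rw [Finset.sum_congr rfl (fun i _ => natDegree_X_add_C _), Finset.sum_const,
        smul_eq_mul, mul_one, Finset.card_range]
    have hd2 : (∏ i ∈ range (n-r), (C (α+(n:ℝ)+1+(i:ℝ)) - X)).natDegree = n-r := by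
      rw [natDegree_prod _ _ hne2]
      rw [Finset.sum_congr rfl (fun i _ => ?_), Finset.sum_const, smul_eq_mul, mul_one,
        Finset.card_range]
      rw [show (C (α+(n:ℝ)+1+(i:ℝ)) - X) = -(X - C (α+(n:ℝ)+1+(i:ℝ))) by ring]
      rw [natDegree_neg, natDegree_X_sub_C]
    have hQdeg : Q.natDegree < n := by
      rw [hQ, natDegree_mul (Finset.prod_ne_zero_iff.mpr hne1) (Finset.prod_ne_zero_iff.mpr hne2),
        hd1, hd2]
      omega
    have hQeval : ∀ j : ℕ, j ≤ n →
        Q.eval (j:ℝ) = poch (β+2+(j:ℝ)) (r-1) * poch (α+1+((n-j:ℕ):ℝ)) (n-r) := by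
      intro j hj
      rw [hQ, eval_mul, eval_prod, eval_prod, poch, poch]
      congr 1
      · refine Finset.prod_congr rfl (fun i _ => ?_)
        rw [eval_add, eval_C, eval_X]; ring
      · refine Finset.prod_congr rfl (fun i _ => ?_)
        rw [eval_sub, eval_C, eval_X, Nat.cast_sub hj]; ring
    have hfrac : ∀ j : ℕ,
        poch (β+1+(r:ℝ)) j / poch (β+2) j = poch (β+2+(j:ℝ)) (r-1) / poch (β+2) (r-1) := by
      intro j
      have n2 : poch (β+2) j ≠ 0 := ne_of_gt (poch_pos hβ2 _)
      have n3 : poch (β+2) (r-1) ≠ 0 := ne_of_gt (poch_pos hβ2 _)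
      rw [div_eq_div_iff n2 n3]
      have e1 : poch (β+2) ((r-1)+j) = poch (β+2) (r-1) * poch (β+1+(r:ℝ)) j := by
        rw [poch_add, show β+2+((r-1:ℕ):ℝ) = β+1+(r:ℝ) from by
          rw [Nat.cast_sub hrpos]; push_cast; ring]
      have e2 : poch (β+2) (j+(r-1)) = poch (β+2) j * poch (β+2+(j:ℝ)) (r-1) := poch_add _ _ _
      have e3 : poch (β+2) (r-1) * poch (β+1+(r:ℝ)) j = poch (β+2) j * poch (β+2+(j:ℝ)) (r-1) := by
        rw [← e1, ← e2, add_comm (r-1) j]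
      rw [mul_comm, e3, mul_comm]
    have hstep : ∀ j ∈ range (n+1),
        CST * ((-1:ℝ)^j * (n.choose j : ℝ)
          * (poch (β+1+(r:ℝ)) j / poch (β+2) j) * poch (α+1+((n-j : ℕ):ℝ)) (n-r))
        = (CST / poch (β+2) (r-1)) * ((-1:ℝ)^j * (n.choose j : ℝ) * Q.eval (j:ℝ)) := by
      intro j hjm
      have hj : j ≤ n := by simp only [Finset.mem_range] at hjm; omega
      rw [hfrac j, hQeval j hj]
      ring
    rw [Finset.sum_congr rfl hstep, ← Finset.mul_sum, alt_sum_poly n Q hQdeg, mul_zero]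

section integrals

variable {α β : ℝ}

lemma rpow_mul_pow {y : ℝ} (hy : 0 ≤ y) {a : ℝ} (ha : -1 < a) (m : ℕ) :
    y ^ a * y ^ m = y ^ (a + (m:ℝ)) := by
  rcases eq_or_lt_of_le hy with h | h
  · cases m with
    | zero => simp
    | succ m =>
      have hm : (0:ℝ) ≤ (m:ℝ) := Nat.cast_nonneg m
      have hne : a + ((m+1 : ℕ):ℝ) ≠ 0 := ne_of_gt (by push_cast; linarith)
      rw [← h, zero_pow (Nat.succ_ne_zero m), mul_zero, Real.zero_rpow hne]
  · rw [← Real.rpow_natCast y m, ← Real.rpow_add h]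

lemma bern_integrand_eq (hα : α > -1) (hβ : β > -1) {n j r : ℕ} (hj : j ≤ n) (hr : r ≤ n) {x : ℝ}
    (hx : x ∈ Set.Icc (0:ℝ) 1) :
    (1 - x) ^ α * x ^ β * bern n j x * bern n r x
      = ((n.choose j : ℝ) * (n.choose r : ℝ)) *
          (x ^ (β + ((j+r : ℕ):ℝ)) * (1-x) ^ (α + (((n-j)+(n-r) : ℕ):ℝ))) := by
  have hx0 : (0:ℝ) ≤ x := hx.1
  have hx1 : (0:ℝ) ≤ 1 - x := by linarith [hx.2]
  have e1 : x ^ β * x ^ (j+r) = x ^ (β + ((j+r : ℕ):ℝ)) := rpow_mul_pow hx0 hβ _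
  have e2 : (1-x) ^ α * (1-x) ^ ((n-j)+(n-r)) = (1-x) ^ (α + (((n-j)+(n-r) : ℕ):ℝ)) :=
    rpow_mul_pow hx1 hα _
  rw [bern, bern, ← e1, ← e2, pow_add, pow_add]
  ring

lemma core_integrable (hα : α > -1) (hβ : β > -1) (m1 m2 : ℕ) :
    IntervalIntegrable (fun x : ℝ => x ^ (β + (m1:ℝ)) * (1-x) ^ (α + (m2:ℝ))) volume 0 1 :=
  betaIntegrable _ _ (by have : (0:ℝ) ≤ (m1:ℝ) := Nat.cast_nonneg m1; linarith)
    (by have : (0:ℝ) ≤ (m2:ℝ) := Nat.cast_nonneg m2; linarith)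

lemma bb_integrable (hα : α > -1) (hβ : β > -1) {n j r : ℕ} (hj : j ≤ n) (hr : r ≤ n) :
    IntervalIntegrable (fun x : ℝ => (1 - x) ^ α * x ^ β * bern n j x * bern n r x) volume 0 1 := by
  rw [intervalIntegrable_iff_integrableOn_Ioc_of_le (by norm_num)]
  have h := ((core_integrable hα hβ (j+r) ((n-j)+(n-r))).const_mul
    ((n.choose j : ℝ) * (n.choose r : ℝ)))
  rw [intervalIntegrable_iff_integrableOn_Ioc_of_le (by norm_num)] at h
  refine h.congr_fun (fun x hx => ?_) measurableSet_Ioc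
  exact (bern_integrand_eq hα hβ hj hr (Set.mem_Icc_of_Ioc hx)).symm

lemma jip_bern_bern (hα : α > -1) (hβ : β > -1) {n j r : ℕ} (hj : j ≤ n) (hr : r ≤ n) :
    jip α β (bern n j) (bern n r)
      = (n.choose j : ℝ) * (n.choose r : ℝ)
          * betaF (β + ((j+r : ℕ):ℝ) + 1) (α + (((n-j)+(n-r) : ℕ):ℝ) + 1) := by
  rw [jip]
  rw [intervalIntegral.integral_congr (g := fun x : ℝ => ((n.choose j : ℝ) * (n.choose r : ℝ)) *
        (x ^ (β + ((j+r : ℕ):ℝ)) * (1-x) ^ (α + (((n-j)+(n-r) : ℕ):ℝ))))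
      (fun x hx => bern_integrand_eq hα hβ hj hr (by rwa [Set.uIcc_of_le (by norm_num)] at hx))]
  rw [intervalIntegral.integral_const_mul,
    betaIntegral_eval _ _ (by have : (0:ℝ) ≤ ((j+r:ℕ):ℝ) := Nat.cast_nonneg _; linarith)
      (by have : (0:ℝ) ≤ (((n-j)+(n-r):ℕ):ℝ) := Nat.cast_nonneg _; linarith), betaF]
  rw [show β + ((j+r : ℕ):ℝ) + (α + (((n-j)+(n-r) : ℕ):ℝ)) + 2
      = β + ((j+r : ℕ):ℝ) + 1 + (α + (((n-j)+(n-r) : ℕ):ℝ) + 1) from by ring]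

lemma jip_sum_left (hα : α > -1) (hβ : β > -1) {n : ℕ} (u : ℕ → ℝ) {r : ℕ} (hr : r ≤ n) :
    jip α β (fun x => ∑ j ∈ range (n+1), u j * bern n j x) (bern n r)
      = ∑ j ∈ range (n+1), u j * jip α β (bern n j) (bern n r) := by
  rw [jip]
  have : (fun x : ℝ => (1 - x) ^ α * x ^ β * (∑ j ∈ range (n+1), u j * bern n j x) * bern n r x)
      = fun x : ℝ => ∑ j ∈ range (n+1),
          u j * ((1 - x) ^ α * x ^ β * bern n j x * bern n r x) := by
    funext x
    rw [Finset.mul_sum, Finset.sum_mul]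
    exact Finset.sum_congr rfl (fun j _ => by ring)
  rw [this, intervalIntegral.integral_finset_sum (fun j hjm => ?_)]
  · exact Finset.sum_congr rfl (fun j hjm => by
      rw [intervalIntegral.integral_const_mul]; rfl)
  · exact (bb_integrable hα hβ (by simp only [Finset.mem_range] at hjm; omega) hr).const_mul _

end integrals

section main2

variable {α β : ℝ}

lemma sumBI (hα : α > -1) (hβ : β > -1) {n r : ℕ} (hr : r ≤ n) (u : ℕ → ℝ) :
    IntervalIntegrable
      (fun x : ℝ => (1 - x) ^ α * x ^ β * (∑ j ∈ range (n+1), u j * bern n j x) * bern n r x)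
      volume 0 1 := by
  have he : (fun x : ℝ => (1 - x) ^ α * x ^ β * (∑ j ∈ range (n+1), u j * bern n j x) * bern n r x)
      = ∑ j ∈ range (n+1),
          (fun x : ℝ => u j * ((1 - x) ^ α * x ^ β * bern n j x * bern n r x)) := by
    funext x
    simp only [Finset.sum_apply]
    rw [Finset.mul_sum, Finset.sum_mul]
    exact Finset.sum_congr rfl (fun j _ => by ring)
  rw [he]
  exact IntervalIntegrable.sum _ (fun j hjm =>
    (bb_integrable hα hβ (by simp only [Finset.mem_range] at hjm; omega) hr).const_mul _)

lemma jip_sum_right (hα : α > -1) (hβ : β > -1) {n : ℕ} (u v : ℕ → ℝ) :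
    jip α β (fun x => ∑ j ∈ range (n+1), u j * bern n j x)
        (fun x => ∑ r ∈ range (n+1), v r * bern n r x)
      = ∑ r ∈ range (n+1),
          v r * jip α β (fun x => ∑ j ∈ range (n+1), u j * bern n j x) (bern n r) := by
  rw [jip]
  have he : (fun x : ℝ => (1 - x) ^ α * x ^ β * (∑ j ∈ range (n+1), u j * bern n j x)
        * (∑ r ∈ range (n+1), v r * bern n r x))
      = fun x : ℝ => ∑ r ∈ range (n+1),
          v r * ((1 - x) ^ α * x ^ β * (∑ j ∈ range (n+1), u j * bern n j x) * bern n r x) := by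
    funext x
    rw [Finset.mul_sum]
    exact Finset.sum_congr rfl (fun r _ => by ring)
  rw [he, intervalIntegral.integral_finset_sum (fun r hrm =>
    (sumBI hα hβ (by simp only [Finset.mem_range] at hrm; omega) u).const_mul _)]
  exact Finset.sum_congr rfl (fun r hrm => by rw [intervalIntegral.integral_const_mul]; rfl)

lemma bern_cont (n j : ℕ) : Continuous (bern n j) := by
  unfold bern
  exact (continuous_const.mul (continuous_pow j)).mul
    ((continuous_const.sub continuous_id).pow _)

end main2

theorem bezier_coefficients_initial_row (α β : ℝ) (hα : α > -1) (hβ : β > -1)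
    (n : ℕ) (D : Polynomial ℝ) (hdeg : D.natDegree ≤ n)
    (hdual : ∀ r ≤ n, jip α β (fun x => D.eval x) (bern n r) = if r = 0 then 1 else 0)
    (c : ℕ → ℝ)
    (hc : ∀ x : ℝ, D.eval x = ∑ r ∈ Finset.range (n + 1), c r * bern n r x)
    (j : ℕ) (hj : j ≤ n) :
    c j =
      (poch (α + β + 2) n * poch (β + 2) n / ((n.factorial : ℝ) * betaF (α + 1) (β + 1))) *
        ((-1 : ℝ) ^ j / (poch (α + 1) (n - j) * poch (β + 2) j)) := by
  set c' : ℕ → ℝ := fun i =>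
    (poch (α + β + 2) n * poch (β + 2) n / ((n.factorial : ℝ) * betaF (α + 1) (β + 1))) *
      ((-1 : ℝ) ^ i / (poch (α + 1) (n - i) * poch (β + 2) i)) with hc'
  set d : ℕ → ℝ := fun i => c i - c' i with hd
  -- the linear system satisfied by both c and c'
  have hsysc : ∀ r ≤ n, ∑ i ∈ range (n+1), c i * jip α β (bern n i) (bern n r)
      = if r = 0 then 1 else 0 := by
    intro r hr
    rw [← jip_sum_left hα hβ c hr]
    rw [show (fun x => ∑ i ∈ range (n+1), c i * bern n i x) = fun x => D.eval x from
      funext (fun x => (hc x).symm)]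
    exact hdual r hr
  have hsysc' : ∀ r ≤ n, ∑ i ∈ range (n+1), c' i * jip α β (bern n i) (bern n r)
      = if r = 0 then 1 else 0 := by
    intro r hr
    have := keyid α β hα hβ n r hr
    rw [← this]
    refine Finset.sum_congr rfl (fun i him => ?_)
    rw [jip_bern_bern hα hβ (by simp only [Finset.mem_range] at him; omega) hr, hc']
  have hsysd : ∀ r ≤ n, ∑ i ∈ range (n+1), d i * jip α β (bern n i) (bern n r) = 0 := by
    intro r hr
    have h1 := hsysc r hr
    have h2 := hsysc' r hr
    simp only [hd, sub_mul, Finset.sum_sub_distrib]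
    rw [h1, h2, sub_self]
  set g : ℝ → ℝ := fun x => ∑ i ∈ range (n+1), d i * bern n i x with hg
  have hgB : ∀ r ≤ n, jip α β g (bern n r) = 0 := by
    intro r hr
    rw [hg, jip_sum_left hα hβ d hr]
    exact hsysd r hr
  have hgg : jip α β g g = 0 := by
    rw [hg, jip_sum_right hα hβ d d]
    refine Finset.sum_eq_zero (fun r hrm => ?_)
    rw [← hg, hgB r (by simp only [Finset.mem_range] at hrm; omega), mul_zero]
  -- nonnegativity of the integrand
  have hw : ∀ x ∈ Set.Icc (0:ℝ) 1, 0 ≤ (1 - x) ^ α * x ^ β * g x * g x := by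
    intro x hx
    have h1 : (0:ℝ) ≤ (1-x) ^ α := Real.rpow_nonneg (by linarith [hx.2]) _
    have h2 : (0:ℝ) ≤ x ^ β := Real.rpow_nonneg hx.1 _
    calc (0:ℝ) ≤ ((1-x) ^ α * x ^ β) * (g x * g x) :=
          mul_nonneg (mul_nonneg h1 h2) (mul_self_nonneg _)
      _ = (1 - x) ^ α * x ^ β * g x * g x := by ring
  have hgcont : Continuous g := continuous_finset_sum _ (fun i _ => continuous_const.mul (bern_cont n i))
  have hggI : IntervalIntegrable (fun x : ℝ => (1 - x) ^ α * x ^ β * g x * g x) volume 0 1 := by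
    have he : (fun x : ℝ => (1 - x) ^ α * x ^ β * g x * g x)
        = ∑ r ∈ range (n+1), (fun x : ℝ => d r *
            ((1 - x) ^ α * x ^ β * (∑ i ∈ range (n+1), d i * bern n i x) * bern n r x)) := by
      funext x
      simp only [Finset.sum_apply, hg]
      rw [Finset.mul_sum]
      exact Finset.sum_congr rfl (fun r _ => by ring)
    rw [he]
    exact IntervalIntegrable.sum _ (fun r hrm =>
      (sumBI hα hβ (by simp only [Finset.mem_range] at hrm; omega) d).const_mul _)
  -- g vanishes on (0,1)
  have hg0 : ∀ x ∈ Set.Ioo (0:ℝ) 1, g x = 0 := by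
    by_contra hcon
    push_neg at hcon
    obtain ⟨x₀, hx₀, hgx₀⟩ := hcon
    have hopen : IsOpen ({x : ℝ | g x ≠ 0} ∩ Set.Ioo (0:ℝ) 1) :=
      (isOpen_compl_singleton.preimage hgcont).inter isOpen_Ioo
    obtain ⟨δ, hδ, hball⟩ := Metric.isOpen_iff.mp hopen x₀ ⟨hgx₀, hx₀⟩
    set u : ℝ := x₀ - δ/2 with hu
    set v : ℝ := x₀ + δ/2 with hv
    have huv : u < v := by rw [hu, hv]; linarith
    have hsub : Set.Icc u v ⊆ {x : ℝ | g x ≠ 0} ∩ Set.Ioo (0:ℝ) 1 := by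
      intro y hy
      apply hball
      rw [Real.ball_eq_Ioo]
      exact ⟨by rw [hu] at hy; linarith [hy.1], by rw [hv] at hy; linarith [hy.2]⟩
    have hu01 : u ∈ Set.Ioo (0:ℝ) 1 := (hsub ⟨le_refl u, le_of_lt huv⟩).2
    have hv01 : v ∈ Set.Ioo (0:ℝ) 1 := (hsub ⟨le_of_lt huv, le_refl v⟩).2
    have hIcc : Set.Icc u v ⊆ Set.Icc (0:ℝ) 1 :=
      Set.Icc_subset_Icc (le_of_lt hu01.1) (le_of_lt hv01.2)
    have hmono : Set.uIcc u v ⊆ Set.uIcc (0:ℝ) 1 := by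
      rw [Set.uIcc_of_le (le_of_lt huv), Set.uIcc_of_le (by norm_num : (0:ℝ) ≤ 1)]
      exact hIcc
    have hIuv := hggI.mono_set hmono
    have hpos : 0 < ∫ x in u..v, (1 - x) ^ α * x ^ β * g x * g x :=
      intervalIntegral_pos_of_pos_on hIuv (fun x hx => by
        have hmem := hsub (Set.Ioo_subset_Icc_self hx)
        have hx01 : x ∈ Set.Ioo (0:ℝ) 1 := hmem.2
        have hgx : g x ≠ 0 := hmem.1
        have hwpos : 0 < (1-x) ^ α * x ^ β :=
          mul_pos (Real.rpow_pos_of_pos (by linarith [hx01.2]) _)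
            (Real.rpow_pos_of_pos hx01.1 _)
        calc (0:ℝ) < ((1-x) ^ α * x ^ β) * (g x * g x) :=
              mul_pos hwpos (mul_self_pos.mpr hgx)
          _ = (1 - x) ^ α * x ^ β * g x * g x := by ring) huv
    have hmonoI : ∀ a b : ℝ, 0 ≤ a → a ≤ b → b ≤ 1 →
        IntervalIntegrable (fun x : ℝ => (1 - x) ^ α * x ^ β * g x * g x) volume a b :=
      fun a b h0 hab h1 => hggI.mono_set (by
        rw [Set.uIcc_of_le hab, Set.uIcc_of_le (by norm_num : (0:ℝ) ≤ 1)]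
        exact Set.Icc_subset_Icc h0 h1)
    have hI1 := hmonoI 0 u le_rfl hu01.1.le hu01.2.le
    have hI2 := hmonoI u 1 hu01.1.le hu01.2.le le_rfl
    have hI3 := hmonoI u v hu01.1.le huv.le hv01.2.le
    have hI4 := hmonoI v 1 hv01.1.le hv01.2.le le_rfl
    have hadd1 := integral_add_adjacent_intervals hI1 hI2
    have hadd2 := integral_add_adjacent_intervals hI3 hI4
    have hn1 : 0 ≤ ∫ x in (0:ℝ)..u, (1 - x) ^ α * x ^ β * g x * g x :=
      intervalIntegral.integral_nonneg hu01.1.le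
        (fun x hx => hw x ⟨hx.1, le_trans hx.2 hu01.2.le⟩)
    have hn2 : 0 ≤ ∫ x in v..(1:ℝ), (1 - x) ^ α * x ^ β * g x * g x :=
      intervalIntegral.integral_nonneg hv01.2.le
        (fun x hx => hw x ⟨le_trans hv01.1.le hx.1, hx.2⟩)
    have hzero : jip α β g g = ∫ x in (0:ℝ)..1, (1 - x) ^ α * x ^ β * g x * g x := rfl
    rw [hgg] at hzero
    linarith [hpos, hn1, hn2, hadd1, hadd2]
  -- polynomial argument : d i = 0
  have hdz : d j = 0 := by
    set R : Polynomial ℝ := ∑ i ∈ range (n+1), C (d i * (n.choose i : ℝ)) * X ^ i with hR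
    have hRroot : ∀ t : ℝ, 0 < t → R.eval t = 0 := by
      intro t ht
      set x : ℝ := t / (1 + t) with hx
      have h1t : (0:ℝ) < 1 + t := by linarith
      have hx01 : x ∈ Set.Ioo (0:ℝ) 1 :=
        ⟨div_pos ht h1t, (div_lt_one h1t).mpr (by linarith)⟩
      have hgx := hg0 x hx01
      have hxt : x * (1 + t) = t := by rw [hx]; field_simp
      have h1x : (1 - x) * (1 + t) = 1 := by rw [hx]; field_simp; ring
      have key : R.eval t = (1 + t) ^ n * g x := by
        rw [hR, eval_finset_sum, hg, Finset.mul_sum]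
        refine Finset.sum_congr rfl (fun i him => ?_)
        have hi : i ≤ n := by simp only [Finset.mem_range] at him; omega
        rw [eval_mul, eval_pow, eval_C, eval_X, bern]
        calc d i * (n.choose i : ℝ) * t ^ i
            = d i * (n.choose i : ℝ) * (x * (1+t)) ^ i * ((1-x) * (1+t)) ^ (n-i) := by
              rw [hxt, h1x, one_pow, mul_one]
          _ = (1+t) ^ i * (1+t) ^ (n-i) * (d i * ((n.choose i : ℝ) * x ^ i * (1-x) ^ (n-i))) := by
              rw [mul_pow, mul_pow]; ring
          _ = (1+t) ^ n * (d i * ((n.choose i : ℝ) * x ^ i * (1-x) ^ (n-i))) := by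
              rw [← pow_add, Nat.add_sub_cancel' hi]
      rw [key, hgx, mul_zero]
    have hR0 : R = 0 :=
      eq_zero_of_infinite_isRoot R ((Set.Ioi_infinite (0:ℝ)).mono
        (fun t ht => hRroot t (Set.mem_Ioi.mp ht)))
    have hcoeff : R.coeff j = d j * (n.choose j : ℝ) := by
      rw [hR, finset_sum_coeff]
      rw [Finset.sum_congr rfl (fun i _ => by rw [coeff_C_mul, coeff_X_pow])]
      simp only [mul_ite, mul_one, mul_zero]
      rw [Finset.sum_ite_eq (range (n+1)) j (fun i => d i * (n.choose i : ℝ))]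
      simp [Nat.lt_succ_iff, hj]
    rw [hR0, coeff_zero] at hcoeff
    have hcj : (0:ℝ) < (n.choose j : ℝ) := by
      exact_mod_cast Nat.choose_pos hj
    have := hcoeff.symm
    rcases mul_eq_zero.mp this with h | h
    · exact h
    · exact absurd h (ne_of_gt hcj)
  -- polynomial argument : d i = 0
  have hdz : d j = 0 := by
    set R : Polynomial ℝ := ∑ i ∈ range (n+1), C (d i * (n.choose i : ℝ)) * X ^ i with hR
    have hRroot : ∀ t : ℝ, 0 < t → R.eval t = 0 := by
      intro t ht
      set x : ℝ := t / (1 + t) with hx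
      have h1t : (0:ℝ) < 1 + t := by linarith
      have hx01 : x ∈ Set.Ioo (0:ℝ) 1 :=
        ⟨div_pos ht h1t, (div_lt_one h1t).mpr (by linarith)⟩
      have hgx := hg0 x hx01
      have hxt : x * (1 + t) = t := by rw [hx]; field_simp
      have h1x : (1 - x) * (1 + t) = 1 := by rw [hx]; field_simp; ring
      have key : R.eval t = (1 + t) ^ n * g x := by
        rw [hR, eval_finset_sum, hg, Finset.mul_sum]
        refine Finset.sum_congr rfl (fun i him => ?_)
        have hi : i ≤ n := by simp only [Finset.mem_range] at him; omega
        rw [eval_mul, eval_pow, eval_C, eval_X, bern]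
        calc d i * (n.choose i : ℝ) * t ^ i
            = d i * (n.choose i : ℝ) * (x * (1+t)) ^ i * ((1-x) * (1+t)) ^ (n-i) := by
              rw [hxt, h1x, one_pow, mul_one]
          _ = (1+t) ^ i * (1+t) ^ (n-i) * (d i * ((n.choose i : ℝ) * x ^ i * (1-x) ^ (n-i))) := by
              rw [mul_pow, mul_pow]; ring
          _ = (1+t) ^ n * (d i * ((n.choose i : ℝ) * x ^ i * (1-x) ^ (n-i))) := by
              rw [← pow_add, Nat.add_sub_cancel' hi]
      rw [key, hgx, mul_zero]
    have hR0 : R = 0 :=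
      eq_zero_of_infinite_isRoot R ((Set.Ioi_infinite (0:ℝ)).mono
        (fun t ht => hRroot t (Set.mem_Ioi.mp ht)))
    have hcoeff : R.coeff j = d j * (n.choose j : ℝ) := by
      rw [hR, finset_sum_coeff]
      rw [Finset.sum_congr rfl (fun i _ => by rw [coeff_C_mul, coeff_X_pow])]
      simp only [mul_ite, mul_one, mul_zero]
      rw [Finset.sum_ite_eq (range (n+1)) j (fun i => d i * (n.choose i : ℝ))]
      simp [Nat.lt_succ_iff, hj]
    rw [hR0, coeff_zero] at hcoeff
    have hcj : (0:ℝ) < (n.choose j : ℝ) := by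
      exact_mod_cast Nat.choose_pos hj
    have := hcoeff.symm
    rcases mul_eq_zero.mp this with h | h
    · exact h
    · exact absurd h (ne_of_gt hcj)
  have hcc : c j = c' j := by
    have h := hdz
    simp only [hd] at h
    linarith
  rw [hcc]
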